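/- (Ku–Wales monotonicity, combinatorial form.) Let μ and λ be integer partitions of the same integer n with μ₁ = λ₁ and μ ⊴ λ in dominance order (i.e. Σ_{i=1}^{t} μ_i ≤ Σ_{i=1}^{t} λ_i for every t). Then d^μ_k ≤ d^λ_k for every k ≥ 1; consequently D^μ_α ≤ D^λ_α for every real α ≥ 0. -/

import Mathlib

open Finset

/-- The conjugate partition: `conjP L j = λ′_j = #{i : λ_i ≥ j}`. -/
def conjP (L : List ℕ) (j : ℕ) : ℕ := (L.filter (fun p => decide (j ≤ p))).length

/-- `L` is the list of parts of an integer partition (weakly decreasing, positive parts). -/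
def IsPartition (L : List ℕ) : Prop := L.Pairwise (· ≥ ·) ∧ ∀ p ∈ L, 0 < p

/-- Colored permutations of shape `L`: a coloring `c` of the symbols `1,…,λ₁` (represented by
`Fin λ₁`, symbol `i` being `i.1 + 1`) with `1 ≤ c i ≤ λ′_i`, together with a permutation whose
cycles are monochromatic. -/
def ColoredPerms (L : List ℕ) :
    Set ((Fin L.headI → ℕ) × Equiv.Perm (Fin L.headI)) :=
  {x | (∀ i, 1 ≤ x.1 i ∧ x.1 i ≤ conjP L (i.1 + 1)) ∧ ∀ i, x.1 (x.2 i) = x.1 i}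

/-- Colored derangements of shape `L`: colored permutations such that `σ i = i → c i ≠ 1`. -/
def ColoredDerangements (L : List ℕ) :
    Set ((Fin L.headI → ℕ) × Equiv.Perm (Fin L.headI)) :=
  {x | x ∈ ColoredPerms L ∧ ∀ i, x.2 i = i → x.1 i ≠ 1}

/-- Number of cycles of a permutation in its disjoint cycle decomposition,
fixed points counting as cycles. -/
noncomputable def cycleCount {m : ℕ} (σ : Equiv.Perm (Fin m)) : ℕ :=
  σ.cycleType.card + (Finset.univ.filter fun i => σ i = i).card

/-- `dCount L k` : the number `d^λ_k` of colored derangements of shape `L`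
whose permutation has exactly `k` cycles. -/
noncomputable def dCount (L : List ℕ) (k : ℕ) : ℕ :=
  Set.ncard {x | x ∈ ColoredDerangements L ∧ cycleCount x.2 = k}

/-- The λ-Jack derangement number `D^λ_α = Σ_{k=1}^{λ₁} d^λ_k α^{λ₁−k}`. -/
noncomputable def JackD (L : List ℕ) (α : ℝ) : ℝ :=
  ∑ k ∈ Finset.Icc 1 L.headI, (dCount L k : ℝ) * α ^ (L.headI - k)

/-- Block (0-based) of a point of `{1,…,2m}` (points represented by `Fin (2m)`,
point `p` being `p.1 + 1`; the block of `p` is `k` iff `p ∈ {2k−1, 2k}` 1-based). -/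
def blk {m : ℕ} (p : Fin (2 * m)) : Fin m := ⟨p.1 / 2, by have := p.2; omega⟩

/-- Colored perfect matchings of shape `L`: a perfect matching of `{1,…,2λ₁}` (a
fixed-point-free involution) together with a coloring `c` of the blocks `{2k−1,2k}` with
`1 ≤ c_k ≤ λ′_k`, such that matched points lie in blocks of the same color. -/
def ColoredMatchings (L : List ℕ) :
    Set ((Fin L.headI → ℕ) × Equiv.Perm (Fin (2 * L.headI))) :=
  {x | Function.Involutive x.2 ∧ (∀ p, x.2 p ≠ p) ∧
        (∀ k, 1 ≤ x.1 k ∧ x.1 k ≤ conjP L (k.1 + 1)) ∧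
        (∀ p, x.1 (blk (x.2 p)) = x.1 (blk p))}

/-- Colored perfect matching derangements of shape `L`: colored perfect matchings such that
whenever a block `{2k−1,2k}` is itself a pair of the matching, its color is not `1`. -/
def ColoredMatchDerangements (L : List ℕ) :
    Set ((Fin L.headI → ℕ) × Equiv.Perm (Fin (2 * L.headI))) :=
  {x | x ∈ ColoredMatchings L ∧ ∀ p, blk (x.2 p) = blk p → x.1 (blk p) ≠ 1}

/-- The principal lower hook length `h_j = α(λ₁ − j) + λ′_j` of the cell `(1,j)`. -/
noncomputable def hlow (L : List ℕ) (α : ℝ) (j : ℕ) : ℝ :=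
  α * ((L.headI : ℝ) - (j : ℝ)) + (conjP L j : ℝ)

/-- `fixPtCount m k` : the number `d_{m,k}` of permutations of `{1,…,m}` with exactly
`k` fixed points. -/
noncomputable def fixPtCount (m k : ℕ) : ℕ :=
  Set.ncard {σ : Equiv.Perm (Fin m) | (Finset.univ.filter fun i => σ i = i).card = k}

/-- `Ematch m` : the number of perfect matchings of `{1,…,2m}` containing none of the base
pairs `{2t−1, 2t}`. -/
noncomputable def Ematch (m : ℕ) : ℕ :=
  Set.ncard {σ : Equiv.Perm (Fin (2 * m)) |
    Function.Involutive σ ∧ (∀ p, σ p ≠ p) ∧ ∀ p, (σ p).1 / 2 ≠ p.1 / 2}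

lemma cycleCount_conj {m : ℕ} (σ τ : Equiv.Perm (Fin m)) :
    cycleCount (τ * σ * τ⁻¹) = cycleCount σ := by
  unfold cycleCount
  rw [Equiv.Perm.cycleType_conj]
  congr 1
  apply Finset.card_bij (fun i _ => τ⁻¹ i)
  · intro i hi
    simp only [mem_filter, mem_univ, true_and] at hi ⊢
    apply τ.injective; simpa using hi
  · intro a ha b hb hab
    exact τ⁻¹.injective hab
  · intro b hb
    refine ⟨τ b, by simp only [mem_filter, mem_univ, true_and] at hb ⊢; simp [hb], by simp⟩


lemma color_pow {m : ℕ} {σ : Equiv.Perm (Fin m)} {c : Fin m → ℕ}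
    (hc : ∀ i, c (σ i) = c i) (a : Fin m) : ∀ n : ℕ, c ((σ ^ n) a) = c a := by
  intro n
  induction n with
  | zero => simp
  | succ n ih => rw [pow_succ', Equiv.Perm.mul_apply, hc, ih]

lemma color_const {m : ℕ} {σ : Equiv.Perm (Fin m)} {c : Fin m → ℕ}
    (hc : ∀ i, c (σ i) = c i) {a b : Fin m} (h : σ.SameCycle a b) : c a = c b := by
  obtain ⟨n, -, -, hn⟩ := h.exists_pow_eq σ
  rw [← hn, color_pow hc]


def VColor (m : ℕ) (x : ℕ → ℕ) (z : (Fin m → ℕ) × Equiv.Perm (Fin m)) : Prop :=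
  (∀ i, 1 ≤ z.1 i ∧ z.1 i ≤ x i.1) ∧ (∀ i, z.1 (z.2 i) = z.1 i) ∧ (∀ i, z.2 i = i → z.1 i ≠ 1)

noncomputable def gCountN (m : ℕ) (x : ℕ → ℕ) (k : ℕ) : ℕ :=
  Set.ncard {z : (Fin m → ℕ) × Equiv.Perm (Fin m) | VColor m x z ∧ cycleCount z.2 = k}


lemma vfinite (m : ℕ) (x : ℕ → ℕ) (k : ℕ) :
    {z : (Fin m → ℕ) × Equiv.Perm (Fin m) | VColor m x z ∧ cycleCount z.2 = k}.Finite := by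
  apply Set.Finite.subset
    (Set.Finite.prod (Set.Finite.pi (fun i : Fin m => Set.finite_Icc 1 (x i.1))) Set.finite_univ)
  rintro ⟨c, σ⟩ ⟨⟨h1, -, -⟩, -⟩
  exact ⟨fun i _ => h1 i, trivial⟩


lemma step (m k : ℕ) (x : ℕ → ℕ) (p q : Fin m) (hpq : p ≠ q) (h2 : x q.1 + 2 ≤ x p.1) :
    gCountN m x k ≤
      gCountN m (Function.update (Function.update x p.1 (x p.1 - 1)) q.1 (x q.1 + 1)) k := by
  classical
  set y := Function.update (Function.update x p.1 (x p.1 - 1)) q.1 (x q.1 + 1) with hy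
  have hpq' : p.1 ≠ q.1 := fun h => hpq (Fin.val_injective h)
  have hyq : y q.1 = x q.1 + 1 := by simp [hy]
  have hyp : y p.1 = x p.1 - 1 := by
    simp [hy, Function.update_apply, hpq']
  have hyo : ∀ j, j ≠ p.1 → j ≠ q.1 → y j = x j := by
    intro j h1 h2; simp [hy, Function.update_apply, h1, h2]
  set τ := Equiv.swap p q with hτ
  have hτp : τ p = q := Equiv.swap_apply_left p q
  have hτq : τ q = p := Equiv.swap_apply_right p q
  have hττ : ∀ i, τ (τ i) = i := fun i => Equiv.swap_apply_self p q i
  have hτo : ∀ i : Fin m, i ≠ p → i ≠ q → τ i = i := fun i h1 h2 =>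
    Equiv.swap_apply_of_ne_of_ne h1 h2
  have hτinv : τ⁻¹ = τ := Equiv.swap_inv p q
  have happ : ∀ (σ : Equiv.Perm (Fin m)) i, (τ * σ * τ⁻¹) i = τ (σ (τ i)) := by
    intro σ i; simp [hτinv, Equiv.Perm.mul_apply]
  have hsc : ∀ (σ : Equiv.Perm (Fin m)) i,
      (τ * σ * τ⁻¹).SameCycle q i ↔ σ.SameCycle p (τ i) := by
    intro σ i
    rw [Equiv.Perm.sameCycle_conj]
    simp [hτinv, hτq]
  set Φ : (Fin m → ℕ) × Equiv.Perm (Fin m) → (Fin m → ℕ) × Equiv.Perm (Fin m) :=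
    fun z => if z.1 p = x p.1 then
        (fun i => if (τ * z.2 * τ⁻¹).SameCycle q i then x q.1 + 1 else z.1 (τ i),
          τ * z.2 * τ⁻¹)
      else z with hΦ
  have hmaps : ∀ z ∈ {z : (Fin m → ℕ) × Equiv.Perm (Fin m) | VColor m x z ∧ cycleCount z.2 = k},
      Φ z ∈ {z : (Fin m → ℕ) × Equiv.Perm (Fin m) | VColor m y z ∧ cycleCount z.2 = k} := by
    rintro ⟨c, σ⟩ ⟨⟨hb, hcc, hd⟩, hk⟩
    dsimp only at hb hcc hd hk
    have hxq1 : 1 ≤ x q.1 := le_trans (hb q).1 (hb q).2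
    by_cases hcp : c p = x p.1
    · -- recoloring case
      have hqp : ¬ σ.SameCycle p q := by
        intro h
        have := color_const hcc h
        have h1 := (hb q).2
        omega
      simp only [hΦ, Set.mem_setOf_eq]
      rw [if_pos hcp]
      refine ⟨⟨?_, ?_, ?_⟩, by dsimp only; rw [cycleCount_conj]; exact hk⟩
      · intro i
        dsimp only
        by_cases hsi : (τ * σ * τ⁻¹).SameCycle q i
        · rw [if_pos hsi]
          rcases eq_or_ne i q with rfl | hiq
          · rw [hyq]; omega
          · have hpi : σ.SameCycle p (τ i) := (hsc σ i).mp hsi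
            have hip : i ≠ p := by
              rintro rfl
              rw [hτp] at hpi
              exact hqp hpi
            rw [hτo i hip hiq] at hpi
            have hci : c i = x p.1 := by rw [← hcp]; exact (color_const hcc hpi).symm
            have hxi : x p.1 ≤ x i.1 := hci ▸ (hb i).2
            rw [hyo i.1 (fun h => hip (Fin.val_injective h)) (fun h => hiq (Fin.val_injective h))]
            omega
        · rw [if_neg hsi]
          have hiq : i ≠ q := by rintro rfl; exact hsi (Equiv.Perm.SameCycle.refl _ _)
          rcases eq_or_ne i p with rfl | hip
          · rw [hτp, hyp]
            have := (hb q).1; have := (hb q).2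
            omega
          · rw [hτo i hip hiq,
              hyo i.1 (fun h => hip (Fin.val_injective h)) (fun h => hiq (Fin.val_injective h))]
            exact hb i
      · intro i
        dsimp only
        have hshift : (τ * σ * τ⁻¹).SameCycle q ((τ * σ * τ⁻¹) i) ↔ (τ * σ * τ⁻¹).SameCycle q i :=
          Equiv.Perm.sameCycle_apply_right
        by_cases hsi : (τ * σ * τ⁻¹).SameCycle q i
        · rw [if_pos (hshift.mpr hsi), if_pos hsi]
        · rw [if_neg (fun h => hsi (hshift.mp h)), if_neg hsi]
          rw [happ, hττ, hcc]
      · intro i hfix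
        dsimp only at hfix ⊢
        have hfix' : σ (τ i) = τ i := by
          have h0 : τ (σ (τ i)) = i := by rw [← happ]; exact hfix
          have := congrArg τ h0
          rwa [hττ] at this
        by_cases hsi : (τ * σ * τ⁻¹).SameCycle q i
        · rw [if_pos hsi]; omega
        · rw [if_neg hsi]; exact hd (τ i) hfix'
    · -- identity case
      simp only [hΦ, Set.mem_setOf_eq]
      rw [if_neg hcp]
      refine ⟨⟨?_, hcc, hd⟩, hk⟩
      intro i
      dsimp only
      have h1 := (hb i).1
      have h2' := (hb i).2
      by_cases hip : i = p
      · have hyi : y i.1 = x i.1 - 1 := by rw [hip]; exact hyp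
        have hne : c i ≠ x i.1 := by rw [hip]; exact hcp
        have hxx : x q.1 + 2 ≤ x i.1 := by rw [hip]; exact h2
        omega
      · by_cases hiq : i = q
        · have hyi : y i.1 = x i.1 + 1 := by rw [hiq]; exact hyq
          omega
        · rw [hyo i.1 (fun h => hip (Fin.val_injective h)) (fun h => hiq (Fin.val_injective h))]
          omega
  have hinj : Set.InjOn Φ {z : (Fin m → ℕ) × Equiv.Perm (Fin m) | VColor m x z ∧ cycleCount z.2 = k} := by
    rintro ⟨c₁, σ₁⟩ ⟨⟨hb₁, hcc₁, hd₁⟩, -⟩ ⟨c₂, σ₂⟩ ⟨⟨hb₂, hcc₂, hd₂⟩, -⟩ heq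
    dsimp only at hb₁ hcc₁ hd₁ hb₂ hcc₂ hd₂
    by_cases h₁ : c₁ p = x p.1 <;> by_cases h₂ : c₂ p = x p.1
    · simp only [hΦ] at heq
      rw [if_pos h₁, if_pos h₂] at heq
      obtain ⟨hfst, hsnd⟩ := Prod.ext_iff.mp heq
      dsimp only at hfst hsnd
      have hσ : σ₁ = σ₂ := by
        have := mul_left_cancel (mul_right_cancel hsnd)
        exact this
      subst hσ
      have hc : c₁ = c₂ := by
        funext j
        by_cases hj : σ₁.SameCycle p j
        · rw [← color_const hcc₁ hj, ← color_const hcc₂ hj, h₁, h₂]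
        · have hnc : ¬ (τ * σ₁ * τ⁻¹).SameCycle q (τ j) := by
            rw [hsc σ₁ (τ j), hττ]
            exact hj
          have e₁ := congrFun hfst (τ j)
          rw [if_neg hnc, if_neg hnc, hττ] at e₁
          exact e₁
      rw [hc]
    · -- h₁ true, h₂ false : contradiction via value at q
      exfalso
      simp only [hΦ] at heq
      rw [if_pos h₁, if_neg h₂] at heq
      obtain ⟨hfst, -⟩ := Prod.ext_iff.mp heq
      dsimp only at hfst
      have := congrFun hfst q
      rw [if_pos (Equiv.Perm.SameCycle.refl _ _)] at this
      have h3 := (hb₂ q).2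
      omega
    · exfalso
      simp only [hΦ] at heq
      rw [if_neg h₁, if_pos h₂] at heq
      obtain ⟨hfst, -⟩ := Prod.ext_iff.mp heq
      dsimp only at hfst
      have := congrFun hfst q
      rw [if_pos (Equiv.Perm.SameCycle.refl _ _)] at this
      have h3 := (hb₁ q).2
      omega
    · simp only [hΦ] at heq
      rwa [if_neg h₁, if_neg h₂] at heq
  unfold gCountN
  exact Set.ncard_le_ncard_of_injOn Φ hmaps hinj (vfinite m y k)

lemma gCountN_congr (m k : ℕ) (x y : ℕ → ℕ) (h : ∀ j, j < m → x j = y j) :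
    gCountN m x k = gCountN m y k := by
  unfold gCountN
  congr 1
  ext z
  simp only [Set.mem_setOf_eq]
  constructor <;> rintro ⟨⟨h1, h2, h3⟩, h4⟩
  · refine ⟨⟨fun i => ⟨(h1 i).1, ?_⟩, h2, h3⟩, h4⟩
    rw [← h i.1 i.isLt]; exact (h1 i).2
  · refine ⟨⟨fun i => ⟨(h1 i).1, ?_⟩, h2, h3⟩, h4⟩
    rw [h i.1 i.isLt]; exact (h1 i).2


lemma chain (m k : ℕ) : ∀ (n : ℕ) (x y : ℕ → ℕ),
    (∀ i j : ℕ, i ≤ j → j < m → x j ≤ x i) →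
    (∀ i j : ℕ, i ≤ j → j < m → y j ≤ y i) →
    (∑ i ∈ range m, x i = ∑ i ∈ range m, y i) →
    (∀ t, t ≤ m → ∑ i ∈ range t, y i ≤ ∑ i ∈ range t, x i) →
    (∑ t ∈ range (m+1), (∑ i ∈ range t, x i - ∑ i ∈ range t, y i)) = n →
    gCountN m x k ≤ gCountN m y k := by
  intro n
  induction n using Nat.strong_induction_on with
  | _ n ih =>
  intro x y hx hy hsum hdom hn
  by_cases hxy : ∀ j, j < m → x j = y j
  · exact le_of_eq (gCountN_congr m k x y hxy)
  · push_neg at hxy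
    -- the leftmost difference b
    have hSne : ((range m).filter (fun j => x j ≠ y j)).Nonempty := by
      obtain ⟨j, hj1, hj2⟩ := hxy
      exact ⟨j, by simp [mem_filter, hj1, hj2]⟩
    set b := ((range m).filter (fun j => x j ≠ y j)).min' hSne with hb
    have hbmem : b ∈ (range m).filter (fun j => x j ≠ y j) := Finset.min'_mem _ hSne
    rw [mem_filter, mem_range] at hbmem
    obtain ⟨hbm, hbne⟩ := hbmem
    have heqb : ∀ i, i < b → x i = y i := by
      intro i hi
      by_contra hne
      have : b ≤ i := Finset.min'_le _ i (by
        rw [mem_filter, mem_range]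
        exact ⟨lt_trans hi hbm, hne⟩)
      omega
    have hPb : ∑ i ∈ range b, x i = ∑ i ∈ range b, y i :=
      Finset.sum_congr rfl (fun i hi => heqb i (mem_range.mp hi))
    have hxb : y b < x b := by
      have h1 := hdom (b + 1) (by omega)
      rw [Finset.sum_range_succ, Finset.sum_range_succ, hPb] at h1
      omega
    -- the leftmost excess a
    have hSa : ((range m).filter (fun j => x j < y j)).Nonempty := by
      by_contra hemp
      rw [Finset.not_nonempty_iff_eq_empty, Finset.filter_eq_empty_iff] at hemp
      have : ∑ i ∈ range m, y i < ∑ i ∈ range m, x i := by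
        apply Finset.sum_lt_sum
        · intro i hi
          have := hemp (mem_range.mpr (mem_range.mp hi))
          omega
        · exact ⟨b, mem_range.mpr hbm, hxb⟩
      omega
    set a := ((range m).filter (fun j => x j < y j)).min' hSa with ha
    have hamem : a ∈ (range m).filter (fun j => x j < y j) := Finset.min'_mem _ hSa
    rw [mem_filter, mem_range] at hamem
    obtain ⟨ham, haxy⟩ := hamem
    have hba : b < a := by
      rcases lt_trichotomy a b with h | h | h
      · have := heqb a h; omega
      · rw [h] at haxy; omega
      · exact h
    have hlta : ∀ i, i < a → y i ≤ x i := by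
      intro i hi
      by_contra hcon
      have : a ≤ i := Finset.min'_le _ i (by
        rw [mem_filter, mem_range]
        constructor
        · omega
        · omega)
      omega
    have hstrict : ∀ t, b < t → t ≤ a → ∑ i ∈ range t, y i < ∑ i ∈ range t, x i := by
      intro t h1 h2
      apply Finset.sum_lt_sum
      · intro i hi
        have := mem_range.mp hi
        exact hlta i (by omega)
      · exact ⟨b, mem_range.mpr (by omega), hxb⟩
    -- x b ≥ x a + 2
    have hgap : x a + 2 ≤ x b := by
      have h1 : y a ≤ y b := hy b a (le_of_lt hba) ham
      omega
    -- B and A : the move positions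
    have hSB : ((range m).filter (fun j => x j = x b)).Nonempty :=
      ⟨b, by rw [mem_filter, mem_range]; exact ⟨hbm, rfl⟩⟩
    set B := ((range m).filter (fun j => x j = x b)).max' hSB with hB
    have hBmem : B ∈ (range m).filter (fun j => x j = x b) := Finset.max'_mem _ hSB
    rw [mem_filter, mem_range] at hBmem
    obtain ⟨hBm, hBval⟩ := hBmem
    have hbB : b ≤ B := Finset.le_max' _ b (by rw [mem_filter, mem_range]; exact ⟨hbm, rfl⟩)
    have hSA : ((range m).filter (fun j => x j = x a)).Nonempty :=
      ⟨a, by rw [mem_filter, mem_range]; exact ⟨ham, rfl⟩⟩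
    set A := ((range m).filter (fun j => x j = x a)).min' hSA with hA
    have hAmem : A ∈ (range m).filter (fun j => x j = x a) := Finset.min'_mem _ hSA
    rw [mem_filter, mem_range] at hAmem
    obtain ⟨hAm, hAval⟩ := hAmem
    have hAa : A ≤ a := Finset.min'_le _ a (by rw [mem_filter, mem_range]; exact ⟨ham, rfl⟩)
    have hBA : B < A := by
      by_contra hcon
      have := hx A B (by omega) hBm
      omega
    have hBa : B < a := by
      by_contra hcon
      have := hx a B (by omega) hBm
      omega
    have hbA : b < A := by omega
    -- the moved function
    set x' := Function.update (Function.update x B (x B - 1)) A (x A + 1) with hx'def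
    have hBA' : B ≠ A := by omega
    have hx'B : x' B = x B - 1 := by
      simp [hx'def, Function.update_apply, hBA']
    have hx'A : x' A = x A + 1 := by simp [hx'def]
    have hx'o : ∀ j, j ≠ B → j ≠ A → x' j = x j := by
      intro j h1 h2; simp [hx'def, Function.update_apply, h1, h2]
    have hstep : gCountN m x k ≤ gCountN m x' k := by
      have := step m k x ⟨B, hBm⟩ ⟨A, hAm⟩
        (by intro h; exact hBA' (congrArg Fin.val h)) (by simpa using by omega : x A + 2 ≤ x B)
      simpa using this
    refine le_trans hstep ?_
    -- properties of x'
    have hrunB : ∀ j, B < j → j < m → x j < x B := by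
      intro j h1 h2
      have h3 : x j ≤ x B := by have := hx B j (by omega) h2; omega
      rcases lt_or_eq_of_le h3 with h | h
      · exact h
      · exfalso
        have : j ≤ B := Finset.le_max' _ j (by rw [mem_filter, mem_range]; exact ⟨h2, by omega⟩)
        omega
    have hrunA : ∀ j, j < A → x A < x j := by
      intro j h1
      have h3 : x A ≤ x j := hx j A (by omega) hAm
      rcases lt_or_eq_of_le h3 with h | h
      · exact h
      · exfalso
        have : A ≤ j := Finset.min'_le _ j (by rw [mem_filter, mem_range]; constructor <;> omega)
        omega
    have hx' : ∀ i j : ℕ, i ≤ j → j < m → x' j ≤ x' i := by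
      intro i j hij hjm
      rcases eq_or_ne i j with rfl | hne
      · exact le_refl _
      have hij' : i < j := by omega
      by_cases hjB : j = B
      · subst hjB
        rw [hx'B, hx'o i (by omega) (by omega)]
        have := hx i B hij hjm
        omega
      · by_cases hjA : j = A
        · subst hjA
          rw [hx'A]
          by_cases hiB : i = B
          · subst hiB; rw [hx'B]; omega
          · rw [hx'o i hiB (by omega)]
            have := hrunA i hij'
            omega
        · rw [hx'o j hjB hjA]
          by_cases hiB : i = B
          · subst hiB
            rw [hx'B]
            have := hrunB j hij' hjm
            omega
          · by_cases hiA : i = A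
            · subst hiA
              rw [hx'A]
              have := hx A j hij hjm
              omega
            · rw [hx'o i hiB hiA]
              exact hx i j hij hjm
    -- partial sums of x'
    have hxB2 : 2 ≤ x B := by omega
    have hPsame : ∀ t, t ≤ B ∨ A < t → ∑ i ∈ range t, x' i = ∑ i ∈ range t, x i := by
      intro t ht
      rcases ht with ht | ht
      · exact Finset.sum_congr rfl (fun i hi => hx'o i
          (by have := mem_range.mp hi; omega) (by have := mem_range.mp hi; omega))
      · have hBt : B ∈ range t := mem_range.mpr (by omega)
        have hAt : A ∈ range t \ {B} := by
          rw [Finset.mem_sdiff, Finset.mem_singleton]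
          exact ⟨mem_range.mpr (by omega), by omega⟩
        rw [← Finset.add_sum_erase _ x' hBt, ← Finset.add_sum_erase _ x hBt]
        rw [Finset.erase_eq, ← Finset.add_sum_erase _ x' hAt, ← Finset.add_sum_erase _ x hAt]
        have hcong : ∑ i ∈ ((range t \ {B}).erase A), x' i = ∑ i ∈ ((range t \ {B}).erase A), x i := by
          apply Finset.sum_congr rfl
          intro i hi
          rw [Finset.mem_erase, Finset.mem_sdiff, Finset.mem_singleton] at hi
          exact hx'o i hi.2.2 hi.1
        rw [hcong, hx'B, hx'A]
        omega
    have hPle : ∀ t, B < t → t ≤ A → ∑ i ∈ range t, x' i + 1 = ∑ i ∈ range t, x i := by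
      intro t h1 h2
      have hBt : B ∈ range t := mem_range.mpr (by omega)
      rw [← Finset.add_sum_erase _ x' hBt, ← Finset.add_sum_erase _ x hBt]
      have hcong : ∑ i ∈ (range t).erase B, x' i = ∑ i ∈ (range t).erase B, x i := by
        apply Finset.sum_congr rfl
        intro i hi
        rw [Finset.mem_erase, Finset.mem_range] at hi
        exact hx'o i hi.1 (by omega)
      rw [hcong, hx'B]
      omega
    have hsum' : ∑ i ∈ range m, x' i = ∑ i ∈ range m, y i := by
      rw [hPsame m (Or.inr (by omega))]; exact hsum
    have hdom' : ∀ t, t ≤ m → ∑ i ∈ range t, y i ≤ ∑ i ∈ range t, x' i := by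
      intro t htm
      by_cases hcase : t ≤ B ∨ A < t
      · rw [hPsame t hcase]; exact hdom t htm
      · push_neg at hcase
        have := hstrict t (by omega) (by omega)
        have := hPle t (by omega) (by omega)
        omega
    have hmeas : (∑ t ∈ range (m+1), (∑ i ∈ range t, x' i - ∑ i ∈ range t, y i)) < n := by
      rw [← hn]
      apply Finset.sum_lt_sum
      · intro t ht
        by_cases hcase : t ≤ B ∨ A < t
        · rw [hPsame t hcase]
        · push_neg at hcase
          have := hPle t (by omega) (by omega)
          omega
      · refine ⟨B + 1, mem_range.mpr (by omega), ?_⟩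
        have h1 := hPle (B + 1) (by omega) (by omega)
        have h2 := hstrict (B + 1) (by omega) (by omega)
        omega
    exact ih _ hmeas x' y hx' hy hsum' hdom' rfl

lemma conjP_cons (a : ℕ) (L : List ℕ) (j : ℕ) :
    conjP (a :: L) j = (if j ≤ a then 1 else 0) + conjP L j := by
  simp only [conjP, List.filter_cons]
  split <;> rename_i h <;> simp_all <;> omega

lemma conjP_nil (j : ℕ) : conjP [] j = 0 := rfl

lemma conjP_anti (L : List ℕ) {j j' : ℕ} (h : j ≤ j') : conjP L j' ≤ conjP L j := by
  induction L with
  | nil => simp [conjP_nil]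
  | cons a w ih =>
    rw [conjP_cons, conjP_cons]
    have : (if j' ≤ a then 1 else 0) ≤ (if j ≤ a then 1 else 0) := by
      split <;> split <;> omega
    omega

lemma sum_if_le (a t : ℕ) : ∑ j ∈ Icc 1 t, (if j ≤ a then 1 else 0) = min a t := by
  induction t with
  | zero => simp
  | succ t ih =>
    rw [Finset.sum_Icc_succ_top (by omega : 1 ≤ t + 1), ih]
    split <;> omega

lemma sum_conjP (L : List ℕ) (t : ℕ) :
    ∑ j ∈ Icc 1 t, conjP L j = (L.map (fun p => min p t)).sum := by
  induction L with
  | nil => simp [conjP_nil]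
  | cons a w ih =>
    simp only [List.map_cons, List.sum_cons]
    calc ∑ j ∈ Icc 1 t, conjP (a :: w) j
        = ∑ j ∈ Icc 1 t, ((if j ≤ a then 1 else 0) + conjP w j) := by
          apply Finset.sum_congr rfl; intro j _; rw [conjP_cons]
      _ = (∑ j ∈ Icc 1 t, (if j ≤ a then 1 else 0)) + ∑ j ∈ Icc 1 t, conjP w j :=
          Finset.sum_add_distrib
      _ = min a t + (w.map (fun p => min p t)).sum := by rw [sum_if_le, ih]

lemma lemA (t : ℕ) : ∀ (v : List ℕ) (s : ℕ), (v.take s).sum ≤ (v.map (fun p => p - t)).sum + s * t := by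
  intro v
  induction v with
  | nil => intro s; simp
  | cons a w ih =>
    intro s
    cases s with
    | zero => simp
    | succ s =>
      have := ih s
      simp only [List.take_succ_cons, List.sum_cons, List.map_cons]
      have hmul : (s + 1) * t = s * t + t := by ring
      omega

lemma lemB (t : ℕ) : ∀ (v : List ℕ), v.Pairwise (· ≥ ·) →
    ∃ s, (v.map (fun p => p - t)).sum + s * t ≤ (v.take s).sum := by
  intro v
  induction v with
  | nil => intro _; exact ⟨0, by simp⟩
  | cons a w ih =>
    intro hv
    obtain ⟨ha, hw⟩ := List.pairwise_cons.mp hv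
    by_cases h : t < a
    · obtain ⟨s, hs⟩ := ih hw
      refine ⟨s + 1, ?_⟩
      simp only [List.take_succ_cons, List.sum_cons, List.map_cons]
      have hmul : (s + 1) * t = s * t + t := by ring
      omega
    · refine ⟨0, ?_⟩
      simp only [List.take, List.sum_nil, Nat.mul_zero, Nat.add_zero]
      have : ((a :: w).map (fun p => p - t)).sum = 0 := by
        apply List.sum_eq_zero
        intro x hx
        rw [List.mem_map] at hx
        obtain ⟨p, hp, rfl⟩ := hx
        rcases List.mem_cons.mp hp with rfl | hp'
        · omega
        · have := ha p hp'; omega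
      omega

lemma min_sub_sum (t : ℕ) : ∀ (v : List ℕ),
    (v.map (fun p => min p t)).sum + (v.map (fun p => p - t)).sum = v.sum := by
  intro v
  induction v with
  | nil => simp
  | cons a w ih => simp only [List.map_cons, List.sum_cons]; omega

lemma dom_min (M L : List ℕ) (hM : M.Pairwise (· ≥ ·)) (hsum : M.sum = L.sum)
    (hdom : ∀ s, (M.take s).sum ≤ (L.take s).sum) (t : ℕ) :
    (L.map (fun p => min p t)).sum ≤ (M.map (fun p => min p t)).sum := by
  obtain ⟨s, hsB⟩ := lemB t M hM
  have hA := lemA t L s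
  have h1 := hdom s
  have h2 := min_sub_sum t M
  have h3 := min_sub_sum t L
  omega

lemma map_min_of_le (c : ℕ) : ∀ (v : List ℕ), (∀ p ∈ v, p ≤ c) →
    (v.map (fun p => min p c)).sum = v.sum := by
  intro v
  induction v with
  | nil => intro _; simp
  | cons a w ih =>
    intro h
    simp only [List.map_cons, List.sum_cons]
    rw [ih (fun p hp => h p (List.mem_cons_of_mem a hp))]
    have := h a (List.mem_cons_self)
    omega

lemma range_sum_shift (f : ℕ → ℕ) (t : ℕ) :
    ∑ j ∈ range t, f (j + 1) = ∑ j ∈ Icc 1 t, f j := by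
  induction t with
  | zero => simp
  | succ t ih =>
    rw [Finset.sum_range_succ, ih, Finset.sum_Icc_succ_top (by omega : 1 ≤ t + 1)]

lemma mem_le_headI {v : List ℕ} (hv : v.Pairwise (· ≥ ·)) : ∀ p ∈ v, p ≤ v.headI := by
  cases v with
  | nil => intro p hp; cases hp
  | cons a w =>
    intro p hp
    rcases List.mem_cons.mp hp with rfl | hp'
    · exact le_refl _
    · exact (List.pairwise_cons.mp hv).1 p hp'

lemma dCount_eq (L : List ℕ) (k : ℕ) :
    dCount L k = gCountN L.headI (fun j => conjP L (j + 1)) k := by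
  unfold dCount gCountN
  congr 1
  ext z
  simp only [Set.mem_setOf_eq, ColoredDerangements, ColoredPerms, VColor]
  tauto

lemma sum_range_conjP (L : List ℕ) (hL : L.Pairwise (· ≥ ·)) :
    ∑ j ∈ range L.headI, conjP L (j + 1) = L.sum := by
  rw [range_sum_shift, sum_conjP, map_min_of_le _ _ (mem_le_headI hL)]

/-- Ku–Wales monotonicity, combinatorial form. -/
theorem ku_wales_monotonicity (M L : List ℕ) (hM : IsPartition M) (hL : IsPartition L)
    (hsum : M.sum = L.sum) (hhead : M.headI = L.headI)
    (hdom : ∀ t : ℕ, (M.take t).sum ≤ (L.take t).sum) :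
    (∀ k : ℕ, 1 ≤ k → dCount M k ≤ dCount L k) ∧
      (∀ α : ℝ, 0 ≤ α → JackD M α ≤ JackD L α) := by
  have key : ∀ k : ℕ, dCount M k ≤ dCount L k := by
    intro k
    rw [dCount_eq, dCount_eq, hhead]
    apply chain L.headI k _ (fun j => conjP M (j + 1)) (fun j => conjP L (j + 1))
      ?_ ?_ ?_ ?_ rfl
    · intro i j hij _
      exact conjP_anti M (by omega)
    · intro i j hij _
      exact conjP_anti L (by omega)
    · rw [← hhead, sum_range_conjP M hM.1, hhead, sum_range_conjP L hL.1]
      exact hsum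
    · intro t _
      rw [range_sum_shift, range_sum_shift, sum_conjP, sum_conjP]
      exact dom_min M L hM.1 hsum hdom t
  refine ⟨fun k _ => key k, fun α hα => ?_⟩
  unfold JackD
  rw [hhead]
  apply Finset.sum_le_sum
  intro k _
  have h1 : (dCount M k : ℝ) ≤ (dCount L k : ℝ) := by exact_mod_cast key k
  exact mul_le_mul_of_nonneg_right h1 (pow_nonneg hα _)
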